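/- Let η, β : W → A, f : Σ_A W → X with ι_X = f∘θ, and let ρ : Σ_A W → B, κ_Y : B → Y, χ : X → Y form a homotopy commutative square χ∘f ≃ κ_Y∘ρ. Then for every n ≥ 1 this square splits through the Ganea constructions: there exist maps φ_i : G_i(ι_X) → G_i(κ_Y) for 1 ≤ i ≤ n such that φ_1∘ω_1 ≃ α_1(κ_Y)∘ρ, γ_{1,n}(κ_Y)∘φ_1 ≃ φ_n∘γ_{1,n}(ι_X), and g_n(κ_Y)∘φ_n ≃ χ∘g_n(ι_X), where the Ganea construction of κ_Y : B → Y is taken with base B. -/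

import Mathlib

/-!
Framework: pointed/topological homotopy theory à la Doeraene–El Haouari.
Concrete models of homotopy pullbacks (path space construction) and homotopy
pushouts (double mapping cylinders), the Ganea construction of a map,
sectional category `secat`, relative category `relcat` (and of order `k`,
`relcatk`), relative suspensions, the whisker maps `ω_n`, the Hopf category
`hcat` and the strong Hopf category `Hcat`.
-/

noncomputable section

open ContinuousMap unitInterval

universe u

section Basic

variable {W A B X Y P Z' : Type u} [TopologicalSpace W] [TopologicalSpace A] [TopologicalSpace B]
  [TopologicalSpace X] [TopologicalSpace Y] [TopologicalSpace P] [TopologicalSpace Z']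

/-- `f : X → Y` is a homotopy equivalence. -/
def IsHEquiv {X Y : Type u} [TopologicalSpace X] [TopologicalSpace Y] (f : C(X, Y)) : Prop :=
  ∃ g : C(Y, X), (f.comp g).Homotopic (ContinuousMap.id Y) ∧ (g.comp f).Homotopic (ContinuousMap.id X)

/-- `p` is a homotopy epimorphism: `u ∘ p ≃ v ∘ p` implies `u ≃ v`. -/
def IsHEpi {X Y : Type u} [TopologicalSpace X] [TopologicalSpace Y] (p : C(X, Y)) : Prop :=
  ∀ (Z : TopCat.{u}) (u v : C(Y, Z)), (u.comp p).Homotopic (v.comp p) → u.Homotopic v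

/-- The concrete homotopy pullback of `f : A → X` and `g : B → X`:
points of `A` and `B` together with a path joining their images. -/
@[reducible] def HPb (f : C(A, X)) (g : C(B, X)) : Type u :=
  {p : A × C(unitInterval, X) × B // p.2.1 0 = f p.1 ∧ p.2.1 1 = g p.2.2}

/-- First projection of the homotopy pullback. -/
def HPb.pr1 (f : C(A, X)) (g : C(B, X)) : C(HPb f g, A) :=
  ⟨fun p => p.1.1, (continuous_fst.comp continuous_subtype_val)⟩

/-- Second projection of the homotopy pullback. -/
def HPb.pr2 (f : C(A, X)) (g : C(B, X)) : C(HPb f g, B) :=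
  ⟨fun p => p.1.2.2, (continuous_snd.comp (continuous_snd.comp continuous_subtype_val))⟩

/-- The canonical homotopy `f ∘ pr1 ≃ g ∘ pr2` on the homotopy pullback,
given by evaluating the path component. -/
def HPb.evalHomotopy (f : C(A, X)) (g : C(B, X)) :
    ContinuousMap.Homotopy (f.comp (HPb.pr1 f g)) (g.comp (HPb.pr2 f g)) where
  toFun := fun q => q.2.1.2.1 q.1
  continuous_toFun := by
    have h1 : Continuous fun q : unitInterval × HPb f g => ((q.2.1.2.1 : C(unitInterval, X)), q.1) :=
      ((continuous_fst.comp (continuous_snd.comp (continuous_subtype_val.comp continuous_snd)))).prodMk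
        continuous_fst
    exact continuous_eval.comp h1
  map_zero_left := fun p => p.2.1
  map_one_left := fun p => p.2.2

/-- The whisker map into the homotopy pullback induced by a homotopy commutative square. -/
def HPb.whisker (f : C(A, X)) (g : C(B, X)) (p : C(Z', A)) (q : C(Z', B))
    (H : ContinuousMap.Homotopy (f.comp p) (g.comp q)) : C(Z', HPb f g) where
  toFun := fun z => ⟨(p z, ((H.toContinuousMap.comp ContinuousMap.prodSwap).curry z, q z)),
    ⟨H.apply_zero z, H.apply_one z⟩⟩
  continuous_toFun := by
    apply Continuous.subtype_mk
    exact (map_continuous p).prodMk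
      (((map_continuous (H.toContinuousMap.comp ContinuousMap.prodSwap).curry)).prodMk
        (map_continuous q))

/-- A homotopy commutative square is a homotopy pullback if some whisker map
to the concrete homotopy pullback is a homotopy equivalence. -/
def IsHPullback (f : C(A, X)) (g : C(B, X)) (p : C(Z', A)) (q : C(Z', B)) : Prop :=
  ∃ H : ContinuousMap.Homotopy (f.comp p) (g.comp q), IsHEquiv (HPb.whisker f g p q H)

/-- The gluing relation for the double mapping cylinder of `f : W → A` and `g : W → B`. -/
inductive DCylRel (f : C(W, A)) (g : C(W, B)) :
    (A ⊕ (B ⊕ W × unitInterval)) → (A ⊕ (B ⊕ W × unitInterval)) → Prop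
  | left (w : W) : DCylRel f g (Sum.inl (f w)) (Sum.inr (Sum.inr (w, 0)))
  | right (w : W) : DCylRel f g (Sum.inr (Sum.inl (g w))) (Sum.inr (Sum.inr (w, 1)))

/-- The double mapping cylinder: the concrete homotopy pushout of `f : W → A`, `g : W → B`. -/
@[reducible] def DCyl (f : C(W, A)) (g : C(W, B)) : Type u := Quot (DCylRel f g)

/-- Left leg of the double mapping cylinder. -/
def DCyl.inl (f : C(W, A)) (g : C(W, B)) : C(A, DCyl f g) :=
  ⟨fun a => Quot.mk _ (Sum.inl a), continuous_quot_mk.comp continuous_inl⟩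

/-- Right leg of the double mapping cylinder. -/
def DCyl.inr (f : C(W, A)) (g : C(W, B)) : C(B, DCyl f g) :=
  ⟨fun b => Quot.mk _ (Sum.inr (Sum.inl b)), continuous_quot_mk.comp (continuous_inr.comp continuous_inl)⟩

/-- The map out of a double mapping cylinder glued from `u`, `v` and a homotopy `u∘f ≃ v∘g`. -/
def DCyl.glue {f : C(W, A)} {g : C(W, B)} (u : C(A, P)) (v : C(B, P))
    (H : ContinuousMap.Homotopy (u.comp f) (v.comp g)) : C(DCyl f g, P) where
  toFun := Quot.lift (Sum.elim u (Sum.elim v (fun q => H (q.2, q.1))))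
    (by rintro x y (⟨w⟩ | ⟨w⟩)
        · exact (H.apply_zero w).symm
        · exact (H.apply_one w).symm)
  continuous_toFun := by
    apply continuous_quot_lift
    exact (map_continuous u).sumElim ((map_continuous v).sumElim
      ((H.toContinuousMap.continuous).comp continuous_swap))

/-- A homotopy commutative square is a homotopy pushout if some glued map
from the concrete double mapping cylinder is a homotopy equivalence. -/
def IsHPushout (f : C(W, A)) (g : C(W, B)) (u : C(A, P)) (v : C(B, P)) : Prop :=
  ∃ H : ContinuousMap.Homotopy (u.comp f) (v.comp g), IsHEquiv (DCyl.glue u v H)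

/-- A map `g` is relatively dominated by `f` (both defined on `B`). -/
def RelDominated {B Y X : Type u} [TopologicalSpace B] [TopologicalSpace Y] [TopologicalSpace X]
    (g : C(B, Y)) (f : C(B, X)) : Prop :=
  ∃ (φ : C(X, Y)) (sec : C(Y, X)), (φ.comp sec).Homotopic (ContinuousMap.id Y) ∧
    (φ.comp f).Homotopic g ∧ (sec.comp g).Homotopic f

end Basic

section Ganea

variable {A X : Type u} [TopologicalSpace A] [TopologicalSpace X]

/-- One stage of the Ganea construction. -/
structure GaneaAux (A X : Type u) [TopologicalSpace A] [TopologicalSpace X] where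
  /-- the space `G_n` -/
  G : Type u
  /-- its topology -/
  [topG : TopologicalSpace G]
  /-- the Ganea map `g_n : G_n → X` -/
  g : C(G, X)
  /-- the canonical map `α_n : A → G_n` -/
  α : C(A, G)

attribute [instance] GaneaAux.topG

/-- The Ganea construction of `ι : A → X`: `G_0 = A`, `g_0 = ι`, and `G_{n+1}` is the
homotopy pushout (double mapping cylinder) of the two projections of the homotopy
pullback `F_n` of `g_n` and `ι`. -/
def ganeaAux (ι : C(A, X)) : ℕ → GaneaAux A X
  | 0 => { G := A, g := ι, α := ContinuousMap.id A }
  | (n+1) =>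
    { G := DCyl (HPb.pr1 (ganeaAux ι n).g ι) (HPb.pr2 (ganeaAux ι n).g ι)
      g := DCyl.glue (ganeaAux ι n).g ι (HPb.evalHomotopy (ganeaAux ι n).g ι)
      α := DCyl.inr (HPb.pr1 (ganeaAux ι n).g ι) (HPb.pr2 (ganeaAux ι n).g ι) }

/-- The `n`-th Ganea space `G_n(ι)`. -/
def GaneaG (ι : C(A, X)) (n : ℕ) : Type u := (ganeaAux ι n).G

instance (ι : C(A, X)) (n : ℕ) : TopologicalSpace (GaneaG ι n) := (ganeaAux ι n).topG

/-- The `n`-th Ganea map `g_n : G_n(ι) → X`. -/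
def ganeaMap (ι : C(A, X)) (n : ℕ) : C(GaneaG ι n, X) := (ganeaAux ι n).g

/-- The canonical map `α_n : A → G_n(ι)`. -/
def ganeaAlpha (ι : C(A, X)) (n : ℕ) : C(A, GaneaG ι n) := (ganeaAux ι n).α

/-- The `n`-th homotopy fibre `F_n(ι)`: the homotopy pullback of `g_n` and `ι`. -/
def ganeaF (ι : C(A, X)) (n : ℕ) : Type u := HPb (ganeaMap ι n) ι

instance (ι : C(A, X)) (n : ℕ) : TopologicalSpace (ganeaF ι n) :=
  inferInstanceAs (TopologicalSpace (HPb (ganeaMap ι n) ι))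

/-- `β_n : F_n(ι) → G_n(ι)`. -/
def ganeaBeta (ι : C(A, X)) (n : ℕ) : C(ganeaF ι n, GaneaG ι n) := HPb.pr1 (ganeaMap ι n) ι

/-- `η_n : F_n(ι) → A`. -/
def ganeaEta (ι : C(A, X)) (n : ℕ) : C(ganeaF ι n, A) := HPb.pr2 (ganeaMap ι n) ι

/-- `γ_n : G_n(ι) → G_{n+1}(ι)`. -/
def ganeaGamma (ι : C(A, X)) (n : ℕ) : C(GaneaG ι n, GaneaG ι (n+1)) :=
  DCyl.inl (HPb.pr1 (ganeaAux ι n).g ι) (HPb.pr2 (ganeaAux ι n).g ι)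

/-- `γ_{k,k+m} : G_k(ι) → G_{k+m}(ι)`, the composite of the `γ_i`. -/
def ganeaGammaFrom (ι : C(A, X)) (k : ℕ) : (m : ℕ) → C(GaneaG ι k, GaneaG ι (k + m))
  | 0 => ContinuousMap.id _
  | (m+1) => (ganeaGamma ι (k+m)).comp (ganeaGammaFrom ι k m)

/-- The sectional category of `ι : A → X`: the least `n` such that `g_n : G_n(ι) → X`
admits a homotopy section. -/
def secat (ι : C(A, X)) : ℕ∞ :=
  sInf {n : ℕ∞ | ∃ m : ℕ, n = (m : ℕ∞) ∧ ∃ sec : C(X, GaneaG ι m),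
    ((ganeaMap ι m).comp sec).Homotopic (ContinuousMap.id X)}

/-- The relative category of `ι : A → X`: the least `n` such that `g_n : G_n(ι) → X`
admits a homotopy section `σ` with `σ ∘ ι ≃ α_n`. -/
def relcat (ι : C(A, X)) : ℕ∞ :=
  sInf {n : ℕ∞ | ∃ m : ℕ, n = (m : ℕ∞) ∧ ∃ sec : C(X, GaneaG ι m),
    ((ganeaMap ι m).comp sec).Homotopic (ContinuousMap.id X) ∧
    (sec.comp ι).Homotopic (ganeaAlpha ι m)}

/-- The relative category of order `k` of `ι : A → X`: the least `n (= k + m)` such that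
`g_n` admits a homotopy section `σ` with `σ ∘ g_k ≃ γ_{k,n}`. -/
def relcatk (ι : C(A, X)) (k : ℕ) : ℕ∞ :=
  sInf {n : ℕ∞ | ∃ m : ℕ, n = ((k + m : ℕ) : ℕ∞) ∧ ∃ sec : C(X, GaneaG ι (k + m)),
    ((ganeaMap ι (k + m)).comp sec).Homotopic (ContinuousMap.id X) ∧
    (sec.comp (ganeaMap ι k)).Homotopic (ganeaGammaFrom ι k m)}

/-- The Lusternik–Schnirelmann category of the pointed space `(X, x₀)`,
i.e. the relative category of `∗ → X`. -/
def ptcat (X : Type u) [TopologicalSpace X] (x₀ : X) : ℕ∞ :=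
  relcat (ContinuousMap.const PUnit.{u+1} x₀)

end Ganea

section RelSuspension

variable {W A X : Type u} [TopologicalSpace W] [TopologicalSpace A] [TopologicalSpace X]

/-- A relative suspension of `η, β : W → A`: a homotopy pushout of `η` and `β`
both of whose legs are the same map `θ : A → S`.  The structure records the
structure homotopy `K : θ∘η ≃ θ∘β` together with the fact that the glued
comparison map from the double mapping cylinder is a homotopy equivalence. -/
structure RelSusp (η β : C(W, A)) where
  /-- the total space `Σ_A W` -/
  S : Type u
  /-- its topology -/
  [topS : TopologicalSpace S]
  /-- the common leg `θ : A → Σ_A W` -/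
  θ : C(A, S)
  /-- the structure homotopy `θ∘η ≃ θ∘β` -/
  K : ContinuousMap.Homotopy (θ.comp η) (θ.comp β)
  /-- a homotopy inverse to the comparison map `DCyl η β → S` -/
  inv : C(S, DCyl η β)
  glue_inv : ((DCyl.glue θ θ K).comp inv).Homotopic (ContinuousMap.id S)
  inv_glue : (inv.comp (DCyl.glue θ θ K)).Homotopic (ContinuousMap.id (DCyl η β))

attribute [instance] RelSusp.topS

variable {η β : C(W, A)}

/-- Auxiliary: the swap-and-reverse map `W × I → I × W`. -/
def cylSwap : C(W × unitInterval, unitInterval × W) :=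
  ⟨fun p => (unitInterval.symm p.2, p.1),
    (unitInterval.continuous_symm.comp continuous_snd).prodMk continuous_fst⟩

/-- Auxiliary: the family of paths `t ↦ f (K (σ t, w))` from `ι(β w)` to `ι(η w)`. -/
def omegaPath (R : RelSusp η β) (f : C(R.S, X)) : C(W, C(unitInterval, X)) :=
  ContinuousMap.curry ((f.comp R.K.toContinuousMap).comp cylSwap)

/-- Auxiliary: the canonical map `W → F_0(ι)` underlying the whisker map `ω`. -/
def omegaF (R : RelSusp η β) (ι : C(A, X)) (f : C(R.S, X)) (hf : ∀ a, f (R.θ a) = ι a) :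
    C(W, ganeaF ι 0) where
  toFun := fun w => ⟨(β w, (omegaPath R f w, η w)), by
    constructor
    · show (omegaPath R f w) 0 = ι (β w)
      show f (R.K (unitInterval.symm 0, w)) = ι (β w)
      rw [unitInterval.symm_zero, R.K.apply_one]
      exact hf (β w)
    · show (omegaPath R f w) 1 = ι (η w)
      show f (R.K (unitInterval.symm 1, w)) = ι (η w)
      rw [unitInterval.symm_one, R.K.apply_zero]
      exact hf (η w)⟩
  continuous_toFun := by
    apply Continuous.subtype_mk
    exact (map_continuous β).prodMk ((map_continuous (omegaPath R f)).prodMk (map_continuous η))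

/-- The canonical comparison `DCyl η β → G_1(ι)` (the concrete model of `ω_1`). -/
def omegaDCyl (R : RelSusp η β) (ι : C(A, X)) (f : C(R.S, X)) (hf : ∀ a, f (R.θ a) = ι a) :
    C(DCyl η β, GaneaG ι 1) where
  toFun := Quot.lift (Sum.elim
      (fun a => ganeaAlpha ι 1 a)
      (Sum.elim (fun a => ganeaGamma ι 0 (ganeaAlpha ι 0 a))
        (fun q => Quot.mk _ (Sum.inr (Sum.inr (omegaF R ι f hf q.1, unitInterval.symm q.2))))))
    (by
      rintro x y (⟨w⟩ | ⟨w⟩)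
      · show ganeaAlpha ι 1 (η w) =
          Quot.mk _ (Sum.inr (Sum.inr (omegaF R ι f hf w, unitInterval.symm 0)))
        rw [unitInterval.symm_zero]
        exact Quot.sound (DCylRel.right (omegaF R ι f hf w))
      · show ganeaGamma ι 0 (ganeaAlpha ι 0 (β w)) =
          Quot.mk _ (Sum.inr (Sum.inr (omegaF R ι f hf w, unitInterval.symm 1)))
        rw [unitInterval.symm_one]
        exact Quot.sound (DCylRel.left (omegaF R ι f hf w)))
  continuous_toFun := by
    apply continuous_quot_lift
    apply Continuous.sumElim
    · exact map_continuous (ganeaAlpha ι 1)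
    apply Continuous.sumElim
    · exact (map_continuous (ganeaGamma ι 0)).comp (map_continuous (ganeaAlpha ι 0))
    · exact (continuous_quot_mk.comp (continuous_inr.comp continuous_inr)).comp
        (((map_continuous (omegaF R ι f hf)).comp continuous_fst).prodMk
          (unitInterval.continuous_symm.comp continuous_snd))

/-- The whisker map `ω_1 : Σ_A W → G_1(ι)`. -/
def omega1 (R : RelSusp η β) (ι : C(A, X)) (f : C(R.S, X)) (hf : ∀ a, f (R.θ a) = ι a) :
    C(R.S, GaneaG ι 1) :=
  (omegaDCyl R ι f hf).comp R.inv

/-- The whisker map `ω_{1+m} = γ_{1,1+m} ∘ ω_1 : Σ_A W → G_{1+m}(ι)`. -/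
def omega (R : RelSusp η β) (ι : C(A, X)) (f : C(R.S, X)) (hf : ∀ a, f (R.θ a) = ι a) (m : ℕ) :
    C(R.S, GaneaG ι (1 + m)) :=
  (ganeaGammaFrom ι 1 m).comp (omega1 R ι f hf)

/-- The Hopf category of `f : Σ_A W → X`: the least `n ≥ 1` such that
`g_n : G_n(ι_X) → X` (for `ι_X = f ∘ θ`) admits a homotopy section `σ` with `σ ∘ f ≃ ω_n`. -/
def hcat (R : RelSusp η β) {X : Type u} [TopologicalSpace X] (f : C(R.S, X)) : ℕ∞ :=
  sInf {n : ℕ∞ | ∃ m : ℕ, n = ((1 + m : ℕ) : ℕ∞) ∧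
    ∃ sec : C(X, GaneaG (f.comp R.θ) (1 + m)),
      ((ganeaMap (f.comp R.θ) (1 + m)).comp sec).Homotopic (ContinuousMap.id X) ∧
      (sec.comp f).Homotopic (omega R (f.comp R.θ) f (fun _ => rfl) m)}

/-- A chain of homotopy commutative cubes realizing `Hcat ≤ n`, defined by downward
recursion: `HcatChain R n ιn ζn` says that there are spaces `X_0, …, X_n = X`, maps
`ι_i : A → X_i` with `ι_0` a homotopy equivalence and `ι_n = ιn`, maps
`ζ_i : Σ_A W → X_i` with `ζ_n = ζn`, and for each `i < n` a homotopy commutative cube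
whose top face is the relative suspension square and whose bottom face is a homotopy
pushout as in the definition of the strong Hopf category. -/
def HcatChain (R : RelSusp η β) : (n : ℕ) → {X : Type u} → [TopologicalSpace X] →
    C(A, X) → C(R.S, X) → Prop
  | 0 => fun ιn _ =>
      ∃ lam : C(_, A), (ιn.comp lam).Homotopic (ContinuousMap.id _) ∧
        (lam.comp ιn).Homotopic (ContinuousMap.id A)
  | (n+1) => fun ιn ζn =>
      ∃ (X' : TopCat.{u}) (ι' : C(A, X')) (ζ' : C(R.S, X'))
        (Z : TopCat.{u}) (a : C(Z, A)) (z : C(Z, X')) (w : C(W, Z)) (χ : C(X', _)),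
        IsHPushout a z ιn χ ∧
        (a.comp w).Homotopic η ∧
        (z.comp w).Homotopic (ι'.comp β) ∧
        (ζn.comp R.θ).Homotopic ιn ∧
        (ζn.comp R.θ).Homotopic (χ.comp ι') ∧
        HcatChain R n ι' ζ'

/-- `Hcat f ≤ n`. -/
def HcatLe (R : RelSusp η β) {X : Type u} [TopologicalSpace X] (f : C(R.S, X)) (n : ℕ) : Prop :=
  1 ≤ n ∧ ∃ ιn : C(A, X), HcatChain R n ιn f

/-- The strong Hopf category of `f : Σ_A W → X`. -/
def Hcat (R : RelSusp η β) {X : Type u} [TopologicalSpace X] (f : C(R.S, X)) : ℕ∞ :=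
  sInf {n : ℕ∞ | ∃ m : ℕ, n = (m : ℕ∞) ∧ HcatLe R f m}

end RelSuspension

section Spaces

variable {A Z : Type u} [TopologicalSpace A] [TopologicalSpace Z]

/-- The join `A ⋈ B`: the homotopy pushout (double mapping cylinder) of the two
projections `A ← A × B → B`. -/
@[reducible] def Join (A B : Type u) [TopologicalSpace A] [TopologicalSpace B] : Type u :=
  DCyl (⟨Prod.fst, continuous_fst⟩ : C(A × B, A)) (⟨Prod.snd, continuous_snd⟩ : C(A × B, B))

/-- The iterated join of `n+1` copies of `A` (as a bundled space). -/
def IterJoinT (A : Type u) [TopologicalSpace A] : ℕ → TopCat.{u}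
  | 0 => TopCat.of A
  | (n+1) => TopCat.of (Join ↥(IterJoinT A n) A)

/-- The iterated join of `n+1` copies of `A`. -/
@[reducible] def IterJoin (A : Type u) [TopologicalSpace A] (n : ℕ) : Type u := ↥(IterJoinT A n)

/-- Gluing relation for the wedge `A ∨ A`. -/
inductive WedgeRel (A : Type u) (a₀ : A) : (A ⊕ A) → (A ⊕ A) → Prop
  | basept : WedgeRel A a₀ (Sum.inl a₀) (Sum.inr a₀)

/-- The wedge `A ∨ A` of two copies of the pointed space `(A, a₀)`. -/
@[reducible] def Wedge (A : Type u) [TopologicalSpace A] (a₀ : A) : Type u := Quot (WedgeRel A a₀)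

/-- `pr_1 : A ∨ A → A`, collapsing the second wedge summand. -/
def Wedge.pr1 (a₀ : A) : C(Wedge A a₀, A) :=
  ⟨Quot.lift (Sum.elim id (fun _ => a₀)) (by rintro x y ⟨⟩; rfl),
    continuous_quot_lift _ (continuous_id.sumElim continuous_const)⟩

/-- `pr_2 : A ∨ A → A`, collapsing the first wedge summand. -/
def Wedge.pr2 (a₀ : A) : C(Wedge A a₀, A) :=
  ⟨Quot.lift (Sum.elim (fun _ => a₀) id) (by rintro x y ⟨⟩; rfl),
    continuous_quot_lift _ (continuous_const.sumElim continuous_id)⟩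

/-- The inclusion `t₁ : A ∨ A → A × A` of the wedge in the product. -/
def Wedge.incl (a₀ : A) : C(Wedge A a₀, A × A) :=
  ⟨Quot.lift (Sum.elim (fun x => (x, a₀)) (fun x => (a₀, x))) (by rintro x y ⟨⟩; rfl),
    continuous_quot_lift _ ((continuous_id.prodMk continuous_const).sumElim
      (continuous_const.prodMk continuous_id))⟩

/-- The (unreduced) suspension `ΣZ`, as the double mapping cylinder of `∗ ← Z → ∗`. -/
@[reducible] def Susp (Z : Type u) [TopologicalSpace Z] : Type u :=
  DCyl (ContinuousMap.const Z (PUnit.unit : PUnit.{u+1})) (ContinuousMap.const Z PUnit.unit)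

/-- The north pole of the suspension, used as its basepoint. -/
def Susp.north (Z : Type u) [TopologicalSpace Z] : Susp Z := Quot.mk _ (Sum.inl PUnit.unit)

/-- The map `ι_∗ : A → ∗`. -/
def iotaStar (A : Type u) [TopologicalSpace A] : C(A, PUnit.{u+1}) :=
  ContinuousMap.const A PUnit.unit

/-- The `n`-sphere `S^n ⊆ ℝ^{n+1}`. -/
@[reducible] def Sph (n : ℕ) : Type :=
  ↥(Metric.sphere (0 : EuclideanSpace ℝ (Fin (n+1))) 1)

end Spaces

section OldCW

open CategoryTheory CategoryTheory.Limits

namespace RelativeCWComplex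

/-- The `n-1`-dimensional sphere (in `ℝⁿ`), as a bundled space. -/
def sphere (n : ℤ) : TopCat.{u} :=
  TopCat.of (ULift (Metric.sphere (0 : EuclideanSpace ℝ (Fin (Int.toNat n))) 1))

/-- The `n`-dimensional closed disk (in `ℝⁿ`), as a bundled space. -/
def disk (n : ℤ) : TopCat.{u} :=
  TopCat.of (ULift (Metric.closedBall (0 : EuclideanSpace ℝ (Fin (Int.toNat n))) 1))

/-- The inclusion of the `n-1`-sphere in the `n`-disk. -/
def sphereInclusion (n : ℤ) : sphere.{u} n ⟶ disk.{u} n :=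
  TopCat.ofHom ⟨fun p => ULift.up ⟨p.down.1, Metric.sphere_subset_closedBall p.down.2⟩,
    continuous_uliftUp.comp ((continuous_subtype_val.comp continuous_uliftDown).subtype_mk _)⟩

/-- The disjoint union of the sphere inclusions. -/
def sigmaSphereInclusion (n : ℤ) (cells : Type u) :
    (∐ fun (_ : cells) => sphere.{u} n) ⟶ (∐ fun (_ : cells) => disk.{u} n) :=
  Limits.Sigma.map fun _ => sphereInclusion n

/-- The attaching map of a disjoint union of spheres. -/
def sigmaAttachMap (X : TopCat.{u}) (n : ℤ) (cells : Type u)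
    (attachMaps : cells → (sphere.{u} n ⟶ X)) : (∐ fun (_ : cells) => sphere.{u} n) ⟶ X :=
  Limits.Sigma.desc attachMaps

/-- `X'` is obtained from `X` by attaching `n`-disks. -/
structure AttachCells (X X' : TopCat.{u}) (n : ℤ) where
  /-- the index type of the cells -/
  cells : Type u
  /-- the attaching maps -/
  attachMaps : cells → (sphere.{u} n ⟶ X)
  /-- `X'` is the pushout -/
  isoPushout : X' ≅ pushout (sigmaSphereInclusion n cells) (sigmaAttachMap X n cells attachMaps)

end RelativeCWComplex

/-- A relative CW-complex (Mathlib's December 2024 definition). -/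
structure RelativeCWComplex where
  /-- the skeleta -/
  sk : ℕ → TopCat.{u}
  /-- `sk (n+1)` is obtained from `sk n` by attaching `n`-disks -/
  attachCells (n : ℕ) : RelativeCWComplex.AttachCells (sk n) (sk (n + 1)) n

/-- A CW-complex: a relative CW-complex whose `sk 0` is empty. -/
structure CWComplex extends RelativeCWComplex.{u} where
  /-- `sk 0` is empty -/
  isEmpty_sk_zero : IsEmpty (sk 0)

namespace RelativeCWComplex

/-- The inclusion `sk n → sk (n+1)`. -/
def skInclusion (X : RelativeCWComplex.{u}) (n : ℕ) : X.sk n ⟶ X.sk (n + 1) :=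
  pushout.inr _ _ ≫ (X.attachCells n).isoPushout.inv

/-- The total space: the colimit of the skeleta. -/
def toTopCat (X : RelativeCWComplex.{u}) : TopCat.{u} :=
  colimit (Functor.ofSequence X.skInclusion)

end RelativeCWComplex

end OldCW

section Connectivity

/-- The boundary inclusion `S^{k-1} → D^k`. -/
def diskIncl (k : ℕ) : C(↥(Metric.sphere (0 : EuclideanSpace ℝ (Fin k)) 1),
    ↥(Metric.closedBall (0 : EuclideanSpace ℝ (Fin k)) 1)) :=
  ⟨fun x => ⟨x.1, Metric.sphere_subset_closedBall x.2⟩,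
    Continuous.subtype_mk continuous_subtype_val _⟩

/-- `ι : A → X` is a `c`-connected map: for all `k ≤ c`, every strictly commutative
square on the pair `(D^k, S^{k-1})` admits a lift which is exact on the boundary and
commutes up to homotopy rel the boundary sphere. -/
def IsConnMap (c : ℕ) {A X : Type u} [TopologicalSpace A] [TopologicalSpace X]
    (ι : C(A, X)) : Prop :=
  ∀ k : ℕ, k ≤ c →
    ∀ (v : C(↥(Metric.closedBall (0 : EuclideanSpace ℝ (Fin k)) 1), X))
      (u : C(↥(Metric.sphere (0 : EuclideanSpace ℝ (Fin k)) 1), A)),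
      v.comp (diskIncl k) = ι.comp u →
      ∃ w : C(↥(Metric.closedBall (0 : EuclideanSpace ℝ (Fin k)) 1), A),
        w.comp (diskIncl k) = u ∧
        (ι.comp w).HomotopicRel v (Set.range (diskIncl k))

/-- The space `S` carries a CW-structure all of whose cells have dimension `< d`. -/
def IsCWOfDimLt (S : Type u) [TopologicalSpace S] (d : ℕ) : Prop :=
  ∃ (K : CWComplex.{u}) (_ : S ≃ₜ ↥(RelativeCWComplex.toTopCat K.toRelativeCWComplex)),
    ∀ j : ℕ, d ≤ j → IsEmpty ((K.attachCells j).cells)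

/-- The space `S` carries some CW-structure. -/
def IsCW (S : Type u) [TopologicalSpace S] : Prop :=
  ∃ (K : CWComplex.{u}), Nonempty (S ≃ₜ ↥(RelativeCWComplex.toTopCat K.toRelativeCWComplex))

end Connectivity


namespace Stmt7

open unitInterval

/-- clamp a real number to the unit interval -/
noncomputable def el : ℝ → unitInterval := Set.projIcc 0 1 zero_le_one

lemma continuous_el : Continuous el := continuous_projIcc

lemma el_coe_of_mem {x : ℝ} (h0 : 0 ≤ x) (h1 : x ≤ 1) :
    ((el x : unitInterval) : ℝ) = x := by
  simp only [el, Set.projIcc_of_mem zero_le_one ⟨h0, h1⟩]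

lemma el_coe (s : unitInterval) : el (s : ℝ) = s :=
  Subtype.ext (el_coe_of_mem s.2.1 s.2.2)

lemma el_zero : el 0 = 0 := by
  apply Subtype.ext; rw [el_coe_of_mem le_rfl zero_le_one]; rfl

lemma el_one : el 1 = 1 := by
  apply Subtype.ext; rw [el_coe_of_mem zero_le_one le_rfl]; rfl

lemma el_of_nonpos {x : ℝ} (h : x ≤ 0) : el x = 0 :=
  Set.projIcc_of_le_left _ h

lemma el_of_one_le {x : ℝ} (h : 1 ≤ x) : el x = 1 :=
  Set.projIcc_of_right_le _ h

lemma el_symm {x : ℝ} (h0 : 0 ≤ x) (h1 : x ≤ 1) : σ (el x) = el (1 - x) := by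
  apply Subtype.ext
  rw [coe_symm_eq, el_coe_of_mem h0 h1, el_coe_of_mem (by linarith) (by linarith)]

section CylPt

variable {A' X' : Type u} [TopologicalSpace A'] [TopologicalSpace X']

/-- the cylinder points of the Ganea space `G_{n+1}` -/
def cylpt (ι : C(A', X')) (n : ℕ) (q : ganeaF ι n) (u : unitInterval) : GaneaG ι (n + 1) :=
  Quot.mk _ (Sum.inr (Sum.inr (q, u)))

lemma continuous_cylpt (ι : C(A', X')) (n : ℕ) :
    Continuous fun p : ganeaF ι n × unitInterval => cylpt ι n p.1 p.2 :=
  continuous_quot_mk.comp (continuous_inr.comp continuous_inr)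

lemma cylpt_zero (ι : C(A', X')) (n : ℕ) (q : ganeaF ι n) :
    cylpt ι n q 0 = ganeaGamma ι n q.1.1 :=
  (Quot.sound (DCylRel.left q)).symm

lemma cylpt_one (ι : C(A', X')) (n : ℕ) (q : ganeaF ι n) :
    cylpt ι n q 1 = ganeaAlpha ι (n + 1) q.1.2.2 :=
  (Quot.sound (DCylRel.right q)).symm

lemma ganeaMap_cylpt (ι : C(A', X')) (n : ℕ) (q : ganeaF ι n) (u : unitInterval) :
    ganeaMap ι (n + 1) (cylpt ι n q u) = q.1.2.1 u := rfl

lemma ganeaMap_gamma (ι : C(A', X')) (n : ℕ) (x : GaneaG ι n) :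
    ganeaMap ι (n + 1) (ganeaGamma ι n x) = ganeaMap ι n x := rfl

lemma ganeaMap_alpha (ι : C(A', X')) (n : ℕ) (a : A') :
    ganeaMap ι (n + 1) (ganeaAlpha ι (n + 1) a) = ι a := rfl


lemma ganeaMap_mk_inl (ι : C(A', X')) (n : ℕ) (x : GaneaG ι n) :
    ganeaMap ι (n + 1) (Quot.mk _ (Sum.inl x) : GaneaG ι (n + 1)) = ganeaMap ι n x := rfl

lemma ganeaMap_mk_alpha (ι : C(A', X')) (n : ℕ) (a : A') :
    ganeaMap ι (n + 1) (Quot.mk _ (Sum.inr (Sum.inl a)) : GaneaG ι (n + 1)) = ι a := rfl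

lemma ganeaMap_mk_cyl (ι : C(A', X')) (n : ℕ) (qt : ganeaF ι n × unitInterval) :
    ganeaMap ι (n + 1) (Quot.mk _ (Sum.inr (Sum.inr qt)) : GaneaG ι (n + 1))
      = qt.1.1.2.1 qt.2 := rfl

end CylPt

end Stmt7

namespace Stmt7

section Main

variable {W A B X Y : Type u} [TopologicalSpace W] [TopologicalSpace A] [TopologicalSpace B]
  [TopologicalSpace X] [TopologicalSpace Y] {η β : C(W, A)}
  (R : RelSusp η β) (f : C(R.S, X)) (ρ : C(R.S, B)) (κ : C(B, Y)) (χ : C(X, Y))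
  (hq : ContinuousMap.Homotopy (χ.comp f) (κ.comp ρ))

/-- inductive data: `φ_i` together with a homotopy `g_i(κ)∘φ_i ≃ χ∘g_i(ι)` -/
structure PhiK (i : ℕ) : Type u where
  φ : C(GaneaG (f.comp R.θ) i, GaneaG κ i)
  K : ContinuousMap.Homotopy ((ganeaMap κ i).comp φ) (χ.comp (ganeaMap (f.comp R.θ) i))

/-- the base datum at level 0 -/
def phiKzero : PhiK R f κ χ 0 where
  φ := ρ.comp R.θ
  K := { toFun := fun p => hq (σ p.1, R.θ p.2)
         continuous_toFun := hq.continuous.comp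
           ((continuous_symm.comp continuous_fst).prodMk
             ((map_continuous R.θ).comp continuous_snd))
         map_zero_left := fun a => by
           show hq (σ 0, R.θ a) = _
           rw [symm_zero, hq.apply_one]; rfl
         map_one_left := fun a => by
           show hq (σ 1, R.θ a) = _
           rw [symm_one, hq.apply_zero]; rfl }

/-- the concatenated path used in the fibre map `φF_i` -/
def master (i : ℕ) (d : PhiK R f κ χ i) : C(ganeaF (f.comp R.θ) i × unitInterval, Y) where
  toFun p :=
    if (p.2 : ℝ) ≤ 1 / 2 then d.K (el (2 * (p.2 : ℝ)), p.1.1.1)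
    else if (p.2 : ℝ) ≤ 3 / 4 then χ (p.1.1.2.1 (el (4 * (p.2 : ℝ) - 2)))
    else hq (el (4 * (p.2 : ℝ) - 3), R.θ p.1.1.2.2)
  continuous_toFun := by
    have c2 : Continuous fun p : ganeaF (f.comp R.θ) i × unitInterval => ((p.2 : ℝ)) :=
      continuous_subtype_val.comp continuous_snd
    have cq1 : Continuous fun p : ganeaF (f.comp R.θ) i × unitInterval => p.1.1.1 :=
      continuous_fst.comp (continuous_subtype_val.comp continuous_fst)
    have cpath : Continuous fun p : ganeaF (f.comp R.θ) i × unitInterval => p.1.1.2.1 :=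
      continuous_fst.comp (continuous_snd.comp (continuous_subtype_val.comp continuous_fst))
    have ca : Continuous fun p : ganeaF (f.comp R.θ) i × unitInterval => p.1.1.2.2 :=
      continuous_snd.comp (continuous_snd.comp (continuous_subtype_val.comp continuous_fst))
    apply Continuous.if_le
    · exact d.K.continuous.comp
        ((continuous_el.comp (continuous_const.mul c2)).prodMk cq1)
    · apply Continuous.if_le
      · exact (map_continuous χ).comp (continuous_eval.comp
          (cpath.prodMk (continuous_el.comp ((continuous_const.mul c2).sub continuous_const))))
      · exact hq.continuous.comp
          ((continuous_el.comp ((continuous_const.mul c2).sub continuous_const)).prodMk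
            ((map_continuous R.θ).comp ca))
      · exact c2
      · exact continuous_const
      · intro p hp
        have h1 : el (4 * (p.2 : ℝ) - 2) = 1 := el_of_one_le (by rw [hp]; norm_num)
        have h2 : el (4 * (p.2 : ℝ) - 3) = 0 := el_of_nonpos (by rw [hp]; norm_num)
        rw [h1, h2, p.1.2.2, hq.apply_zero]; rfl
    · exact c2
    · exact continuous_const
    · intro p hp
      rw [if_pos (by rw [hp]; norm_num : (p.2 : ℝ) ≤ 3 / 4)]
      have h1 : el (2 * (p.2 : ℝ)) = 1 := el_of_one_le (by rw [hp]; norm_num)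
      have h2 : el (4 * (p.2 : ℝ) - 2) = 0 := el_of_nonpos (by rw [hp]; norm_num)
      rw [h1, h2, d.K.apply_one, p.1.2.1]; rfl

lemma master_zero (i : ℕ) (d : PhiK R f κ χ i) (q : ganeaF (f.comp R.θ) i) :
    master R f ρ κ χ hq i d (q, 0) = ganeaMap κ i (d.φ q.1.1) := by
  show (if ((0 : unitInterval) : ℝ) ≤ 1 / 2 then _ else _) = _
  rw [if_pos (by norm_num : ((0 : unitInterval) : ℝ) ≤ 1 / 2)]
  have h1 : el (2 * ((0 : unitInterval) : ℝ)) = 0 := el_of_nonpos (by norm_num)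
  rw [h1, d.K.apply_zero]; rfl

lemma master_one (i : ℕ) (d : PhiK R f κ χ i) (q : ganeaF (f.comp R.θ) i) :
    master R f ρ κ χ hq i d (q, 1) = κ (ρ (R.θ q.1.2.2)) := by
  show (if ((1 : unitInterval) : ℝ) ≤ 1 / 2 then _ else _) = _
  rw [if_neg (by norm_num : ¬ ((1 : unitInterval) : ℝ) ≤ 1 / 2),
    if_neg (by norm_num : ¬ ((1 : unitInterval) : ℝ) ≤ 3 / 4)]
  have h1 : el (4 * ((1 : unitInterval) : ℝ) - 3) = 1 := el_of_one_le (by norm_num)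
  rw [h1, hq.apply_one]; rfl

/-- the induced map of homotopy fibres -/
def phiF (i : ℕ) (d : PhiK R f κ χ i) : C(ganeaF (f.comp R.θ) i, ganeaF κ i) where
  toFun q := ⟨(d.φ q.1.1, (master R f ρ κ χ hq i d).curry q, ρ (R.θ q.1.2.2)),
    master_zero R f ρ κ χ hq i d q, master_one R f ρ κ χ hq i d q⟩
  continuous_toFun := by
    apply Continuous.subtype_mk
    refine ((map_continuous d.φ).comp
      (continuous_fst.comp continuous_subtype_val)).prodMk (Continuous.prodMk ?_ ?_)
    · exact map_continuous (master R f ρ κ χ hq i d).curry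
    · exact (map_continuous ρ).comp ((map_continuous R.θ).comp
        (continuous_snd.comp (continuous_snd.comp continuous_subtype_val)))

/-- the induced map `φ_{i+1}` -/
def phiSucc (i : ℕ) (d : PhiK R f κ χ i) :
    C(GaneaG (f.comp R.θ) (i + 1), GaneaG κ (i + 1)) where
  toFun := Quot.lift (Sum.elim
      (fun x => ganeaGamma κ i (d.φ x))
      (Sum.elim (fun a => ganeaAlpha κ (i + 1) (ρ (R.θ a)))
        (fun qt => cylpt κ i (phiF R f ρ κ χ hq i d qt.1) qt.2)))
    (by
      rintro x y (⟨q⟩ | ⟨q⟩)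
      · show ganeaGamma κ i (d.φ q.1.1) = cylpt κ i (phiF R f ρ κ χ hq i d q) 0
        rw [cylpt_zero]; rfl
      · show ganeaAlpha κ (i + 1) (ρ (R.θ q.1.2.2))
          = cylpt κ i (phiF R f ρ κ χ hq i d q) 1
        rw [cylpt_one]; rfl)
  continuous_toFun := by
    apply continuous_quot_lift
    refine Continuous.sumElim ?_ (Continuous.sumElim ?_ ?_)
    · exact (map_continuous (ganeaGamma κ i)).comp (map_continuous d.φ)
    · exact (map_continuous (ganeaAlpha κ (i + 1))).comp
        ((map_continuous ρ).comp (map_continuous R.θ))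
    · exact (continuous_cylpt κ i).comp
        (((map_continuous (phiF R f ρ κ χ hq i d)).comp continuous_fst).prodMk continuous_snd)

end Main

end Stmt7

namespace Stmt7

section Main2

variable {W A B X Y : Type u} [TopologicalSpace W] [TopologicalSpace A] [TopologicalSpace B]
  [TopologicalSpace X] [TopologicalSpace Y] {η β : C(W, A)}
  (R : RelSusp η β) (f : C(R.S, X)) (ρ : C(R.S, B)) (κ : C(B, Y)) (χ : C(X, Y))
  (hq : ContinuousMap.Homotopy (χ.comp f) (κ.comp ρ))

/-- the square reparametrisation for the inductive homotopies -/
noncomputable def zeta : C(unitInterval × unitInterval, unitInterval) where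
  toFun p := el ((1 - (p.1 : ℝ)) * (p.2 : ℝ) + (p.1 : ℝ) * ((2 + (p.2 : ℝ)) / 4))
  continuous_toFun := by
    have c1 : Continuous fun p : unitInterval × unitInterval => ((p.1 : ℝ)) :=
      continuous_subtype_val.comp continuous_fst
    have c2 : Continuous fun p : unitInterval × unitInterval => ((p.2 : ℝ)) :=
      continuous_subtype_val.comp continuous_snd
    exact continuous_el.comp (((continuous_const.sub c1).mul c2).add
      (c1.mul ((continuous_const.add c2).div_const _)))

lemma zeta_coe (s t : unitInterval) :
    ((zeta (s, t) : unitInterval) : ℝ) = (1 - (s : ℝ)) * t + s * ((2 + (t : ℝ)) / 4) := by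
  have h0 : (0 : ℝ) ≤ (1 - (s : ℝ)) * t + s * ((2 + (t : ℝ)) / 4) := by
    have := s.2.1; have := s.2.2; have := t.2.1; have := t.2.2; nlinarith
  have h1 : (1 - (s : ℝ)) * t + s * ((2 + (t : ℝ)) / 4) ≤ 1 := by
    have := s.2.1; have := s.2.2; have := t.2.1; have := t.2.2; nlinarith
  exact el_coe_of_mem h0 h1

/-- the curried homotopy `K_i`, as a family of paths -/
def KcPart (i : ℕ) (d : PhiK R f κ χ i) :
    C(GaneaG (f.comp R.θ) i, C(unitInterval, Y)) :=
  (d.K.toContinuousMap.comp ContinuousMap.prodSwap).curry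

/-- the path family over the base `A` -/
def legR : C(A, C(unitInterval, Y)) :=
  ContinuousMap.curry
    ⟨fun p => hq (σ p.2, R.θ p.1), hq.continuous.comp
      ((continuous_symm.comp continuous_snd).prodMk
        ((map_continuous R.θ).comp continuous_fst))⟩

/-- the path family over the cylinder -/
def cylPart (i : ℕ) (d : PhiK R f κ χ i) :
    C(ganeaF (f.comp R.θ) i × unitInterval, C(unitInterval, Y)) :=
  ContinuousMap.curry
    ⟨fun p => master R f ρ κ χ hq i d (p.1.1, zeta (p.2, p.1.2)),
      (map_continuous (master R f ρ κ χ hq i d)).comp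
        ((continuous_fst.comp continuous_fst).prodMk
          ((map_continuous zeta).comp
            (continuous_snd.prodMk (continuous_snd.comp continuous_fst))))⟩

lemma phiSucc_mk_inl (i : ℕ) (d : PhiK R f κ χ i) (x : GaneaG (f.comp R.θ) i) :
    phiSucc R f ρ κ χ hq i d (Quot.mk _ (Sum.inl x) : GaneaG (f.comp R.θ) (i + 1))
      = ganeaGamma κ i (d.φ x) := rfl

lemma phiSucc_mk_alpha (i : ℕ) (d : PhiK R f κ χ i) (a : A) :
    phiSucc R f ρ κ χ hq i d (Quot.mk _ (Sum.inr (Sum.inl a)) : GaneaG (f.comp R.θ) (i + 1))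
      = ganeaAlpha κ (i + 1) (ρ (R.θ a)) := rfl

lemma phiSucc_mk_cyl (i : ℕ) (d : PhiK R f κ χ i)
    (qt : ganeaF (f.comp R.θ) i × unitInterval) :
    phiSucc R f ρ κ χ hq i d
        (Quot.mk _ (Sum.inr (Sum.inr qt)) : GaneaG (f.comp R.θ) (i + 1))
      = cylpt κ i (phiF R f ρ κ χ hq i d qt.1) qt.2 := rfl

lemma phiF_path (i : ℕ) (d : PhiK R f κ χ i) (q : ganeaF (f.comp R.θ) i) :
    ((phiF R f ρ κ χ hq i d q).1.2.1 : C(unitInterval, Y))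
      = (master R f ρ κ χ hq i d).curry q := rfl

/-- curried form of the homotopy `K_{i+1}` -/
def bigLift (i : ℕ) (d : PhiK R f κ χ i) :
    C(GaneaG (f.comp R.θ) (i + 1), C(unitInterval, Y)) where
  toFun := Quot.lift (Sum.elim
      (fun x => KcPart R f κ χ i d x)
      (Sum.elim (fun a => legR R f ρ κ χ hq a)
        (fun qt => cylPart R f ρ κ χ hq i d qt)))
    (by
      rintro x y (⟨q⟩ | ⟨q⟩)
      · show KcPart R f κ χ i d q.1.1 = cylPart R f ρ κ χ hq i d (q, 0)
        ext s
        show d.K (s, q.1.1) = master R f ρ κ χ hq i d (q, zeta (s, 0))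
        have hz : ((zeta (s, (0 : unitInterval)) : unitInterval) : ℝ) = (s : ℝ) / 2 := by
          rw [zeta_coe]; norm_num; ring
        show _ = (if ((zeta (s, (0:unitInterval)) : unitInterval) : ℝ) ≤ 1 / 2 then _ else _)
        rw [if_pos (by rw [hz]; have := s.2.2; linarith)]
        rw [hz]
        have : el (2 * ((s : ℝ) / 2)) = s := by
          rw [show 2 * ((s : ℝ) / 2) = (s : ℝ) by ring, el_coe]
        rw [this]
      · show legR R f ρ κ χ hq q.1.2.2 = cylPart R f ρ κ χ hq i d (q, 1)
        ext s
        show hq (σ s, R.θ q.1.2.2) = master R f ρ κ χ hq i d (q, zeta (s, 1))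
        have hz : ((zeta (s, (1 : unitInterval)) : unitInterval) : ℝ) = 1 - (s : ℝ) / 4 := by
          rw [zeta_coe]; norm_num; ring
        show _ = (if ((zeta (s, (1:unitInterval)) : unitInterval) : ℝ) ≤ 1 / 2 then _ else _)
        rw [if_neg (by rw [hz]; have := s.2.2; intro hcon; linarith)]
        by_cases hs : (s : ℝ) < 1
        · rw [if_neg (by rw [hz]; intro hcon; linarith)]
          have : el (4 * ((zeta (s, (1:unitInterval)) : unitInterval) : ℝ) - 3) = σ s := by
            rw [hz]
            have : (4 : ℝ) * (1 - (s : ℝ) / 4) - 3 = 1 - (s : ℝ) := by ring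
            rw [this]
            apply Subtype.ext
            rw [el_coe_of_mem (by have := s.2.2; linarith) (by have := s.2.1; linarith),
              coe_symm_eq]
          rw [this]
        · have hs1 : (s : ℝ) = 1 := le_antisymm s.2.2 (not_lt.mp hs)
          rw [if_pos (by rw [hz, hs1]; norm_num)]
          have h4 : el (4 * ((zeta (s, (1:unitInterval)) : unitInterval) : ℝ) - 2) = 1 := by
            apply el_of_one_le; rw [hz, hs1]; norm_num
          rw [h4, q.2.2]
          have hss : σ s = 0 := by apply Subtype.ext; rw [coe_symm_eq, hs1]; norm_num
          rw [hss, hq.apply_zero]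
          rfl)
  continuous_toFun := by
    apply continuous_quot_lift
    refine Continuous.sumElim ?_ (Continuous.sumElim ?_ ?_)
    · exact map_continuous (KcPart R f κ χ i d)
    · exact map_continuous (legR R f ρ κ χ hq)
    · exact map_continuous (cylPart R f ρ κ χ hq i d)

lemma bigLift_mk_inl (i : ℕ) (d : PhiK R f κ χ i) (x : GaneaG (f.comp R.θ) i) :
    bigLift R f ρ κ χ hq i d (Quot.mk _ (Sum.inl x) : GaneaG (f.comp R.θ) (i + 1))
      = KcPart R f κ χ i d x := rfl

lemma bigLift_mk_alpha (i : ℕ) (d : PhiK R f κ χ i) (a : A) :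
    bigLift R f ρ κ χ hq i d (Quot.mk _ (Sum.inr (Sum.inl a)) : GaneaG (f.comp R.θ) (i + 1))
      = legR R f ρ κ χ hq a := rfl

lemma bigLift_mk_cyl (i : ℕ) (d : PhiK R f κ χ i)
    (qt : ganeaF (f.comp R.θ) i × unitInterval) :
    bigLift R f ρ κ χ hq i d
        (Quot.mk _ (Sum.inr (Sum.inr qt)) : GaneaG (f.comp R.θ) (i + 1))
      = cylPart R f ρ κ χ hq i d qt := rfl

lemma KcPart_apply (i : ℕ) (d : PhiK R f κ χ i) (x : GaneaG (f.comp R.θ) i)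
    (s : unitInterval) : KcPart R f κ χ i d x s = d.K (s, x) := rfl

lemma legR_apply (a : A) (s : unitInterval) :
    legR R f ρ κ χ hq a s = hq (σ s, R.θ a) := rfl

lemma cylPart_apply (i : ℕ) (d : PhiK R f κ χ i)
    (qt : ganeaF (f.comp R.θ) i × unitInterval) (s : unitInterval) :
    cylPart R f ρ κ χ hq i d qt s
      = master R f ρ κ χ hq i d (qt.1, zeta (s, qt.2)) := rfl

/-- the homotopy `K_{i+1}` -/
def KSucc (i : ℕ) (d : PhiK R f κ χ i) :
    ContinuousMap.Homotopy
      ((ganeaMap κ (i + 1)).comp (phiSucc R f ρ κ χ hq i d))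
      (χ.comp (ganeaMap (f.comp R.θ) (i + 1))) where
  toFun p := bigLift R f ρ κ χ hq i d p.2 p.1
  continuous_toFun :=
    ((bigLift R f ρ κ χ hq i d).uncurry.continuous).comp
      (continuous_snd.prodMk continuous_fst)
  map_zero_left z := by
    induction z using Quot.ind with
    | mk pt =>
      rcases pt with x | a | qt
      · show bigLift R f ρ κ χ hq i d (Quot.mk _ (Sum.inl x)) 0
          = ((ganeaMap κ (i + 1)).comp (phiSucc R f ρ κ χ hq i d)) (Quot.mk _ (Sum.inl x))
        exact d.K.apply_zero x
      · show bigLift R f ρ κ χ hq i d (Quot.mk _ (Sum.inr (Sum.inl a))) 0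
          = ((ganeaMap κ (i + 1)).comp (phiSucc R f ρ κ χ hq i d))
              (Quot.mk _ (Sum.inr (Sum.inl a)))
        exact (congrArg (fun t => hq (t, R.θ a)) symm_zero).trans (hq.apply_one _)
      · show bigLift R f ρ κ χ hq i d (Quot.mk _ (Sum.inr (Sum.inr qt))) 0
          = ((ganeaMap κ (i + 1)).comp (phiSucc R f ρ κ χ hq i d))
              (Quot.mk _ (Sum.inr (Sum.inr qt)))
        have hz : zeta ((0 : unitInterval), qt.2) = qt.2 := by
          apply Subtype.ext; rw [zeta_coe]; norm_num
        exact congrArg (fun t => master R f ρ κ χ hq i d (qt.1, t)) hz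
  map_one_left z := by
    induction z using Quot.ind with
    | mk pt =>
      rcases pt with x | a | qt
      · show bigLift R f ρ κ χ hq i d (Quot.mk _ (Sum.inl x)) 1
          = (χ.comp (ganeaMap (f.comp R.θ) (i + 1))) (Quot.mk _ (Sum.inl x))
        exact d.K.apply_one x
      · show bigLift R f ρ κ χ hq i d (Quot.mk _ (Sum.inr (Sum.inl a))) 1
          = (χ.comp (ganeaMap (f.comp R.θ) (i + 1))) (Quot.mk _ (Sum.inr (Sum.inl a)))
        exact (congrArg (fun t => hq (t, R.θ a)) symm_one).trans (hq.apply_zero _)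
      · show bigLift R f ρ κ χ hq i d (Quot.mk _ (Sum.inr (Sum.inr qt))) 1
          = (χ.comp (ganeaMap (f.comp R.θ) (i + 1))) (Quot.mk _ (Sum.inr (Sum.inr qt)))
        show master R f ρ κ χ hq i d (qt.1, zeta ((1 : unitInterval), qt.2)) = χ (qt.1.1.2.1 qt.2)
        have hz : ((zeta ((1 : unitInterval), qt.2) : unitInterval) : ℝ)
            = (2 + (qt.2 : ℝ)) / 4 := by rw [zeta_coe]; norm_num
        show (if ((zeta ((1:unitInterval), qt.2) : unitInterval) : ℝ) ≤ 1 / 2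
            then _ else _) = _
        by_cases ht : (qt.2 : ℝ) ≤ 0
        · have ht0 : qt.2 = 0 := Subtype.ext (le_antisymm ht qt.2.2.1)
          rw [if_pos (by rw [hz, ht0]; norm_num)]
          have h1 : el (2 * ((zeta ((1:unitInterval), qt.2) : unitInterval) : ℝ)) = 1 := by
            apply el_of_one_le; rw [hz, ht0]; norm_num
          rw [h1, d.K.apply_one]
          show χ (ganeaMap (f.comp R.θ) i qt.1.1.1) = χ (qt.1.1.2.1 qt.2)
          rw [ht0, qt.1.2.1]; rfl
        · rw [if_neg (by rw [hz]; intro hcon; linarith)]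
          rw [if_pos (by rw [hz]; have := qt.2.2.2; linarith)]
          have h1 : el (4 * ((zeta ((1:unitInterval), qt.2) : unitInterval) : ℝ) - 2)
              = qt.2 := by
            rw [hz, show 4 * ((2 + (qt.2:ℝ)) / 4) - 2 = (qt.2 : ℝ) by ring, el_coe]
          rw [h1]

/-- the full inductive family -/
def phiK : (i : ℕ) → PhiK R f κ χ i
  | 0 => phiKzero R f ρ κ χ hq
  | (i + 1) => ⟨phiSucc R f ρ κ χ hq i (phiK i), KSucc R f ρ κ χ hq i (phiK i)⟩

lemma gamma_phi (i : ℕ) :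
    (ganeaGamma κ i).comp (phiK R f ρ κ χ hq i).φ
      = ((phiK R f ρ κ χ hq (i + 1)).φ).comp (ganeaGamma (f.comp R.θ) i) :=
  ContinuousMap.ext fun _ => rfl

lemma gammaFrom_phi (m : ℕ) :
    (ganeaGammaFrom κ 1 m).comp (phiK R f ρ κ χ hq 1).φ
      = ((phiK R f ρ κ χ hq (1 + m)).φ).comp (ganeaGammaFrom (f.comp R.θ) 1 m) := by
  induction m with
  | zero => ext x; rfl
  | succ m ih =>
    show ((ganeaGamma κ (1 + m)).comp (ganeaGammaFrom κ 1 m)).comp _ = _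
    rw [ContinuousMap.comp_assoc, ih, ← ContinuousMap.comp_assoc, gamma_phi,
      ContinuousMap.comp_assoc]
    rfl

end Main2

end Stmt7

namespace Stmt7

section Cond1

variable {W A B X Y : Type u} [TopologicalSpace W] [TopologicalSpace A] [TopologicalSpace B]
  [TopologicalSpace X] [TopologicalSpace Y] {η β : C(W, A)}
  (R : RelSusp η β) (f : C(R.S, X)) (ρ : C(R.S, B)) (κ : C(B, Y)) (χ : C(X, Y))
  (hq : ContinuousMap.Homotopy (χ.comp f) (κ.comp ρ))
  (hf : ∀ a, f (R.θ a) = (f.comp R.θ) a)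

/-- first coordinate of the boundary path of the square -/
noncomputable def g1R (u : unitInterval) : ℝ :=
  if (u : ℝ) ≤ 1 / 2 then 1 - 2 * (u : ℝ)
  else if (u : ℝ) ≤ 3 / 4 then 0 else 4 * (u : ℝ) - 3

/-- second coordinate of the boundary path of the square -/
noncomputable def g2R (u : unitInterval) : ℝ :=
  if (u : ℝ) ≤ 1 / 2 then 1
  else if (u : ℝ) ≤ 3 / 4 then 3 - 4 * (u : ℝ) else 0

lemma continuous_g1R : Continuous g1R := by
  apply Continuous.if_le
  · exact continuous_const.sub (continuous_const.mul continuous_subtype_val)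
  · apply Continuous.if_le
    · exact continuous_const
    · exact (continuous_const.mul continuous_subtype_val).sub continuous_const
    · exact continuous_subtype_val
    · exact continuous_const
    · intro u hu; rw [hu]; norm_num
  · exact continuous_subtype_val
  · exact continuous_const
  · intro u hu; rw [if_pos (by rw [hu]; norm_num : (u : ℝ) ≤ 3 / 4), hu]; norm_num

lemma continuous_g2R : Continuous g2R := by
  apply Continuous.if_le
  · exact continuous_const
  · apply Continuous.if_le
    · exact continuous_const.sub (continuous_const.mul continuous_subtype_val)
    · exact continuous_const
    · exact continuous_subtype_val
    · exact continuous_const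
    · intro u hu; rw [hu]; norm_num
  · exact continuous_subtype_val
  · exact continuous_const
  · intro u hu; rw [if_pos (by rw [hu]; norm_num : (u : ℝ) ≤ 3 / 4), hu]; norm_num

/-- deformation of the image of the structure square of the relative suspension -/
def bigA : C(W × unitInterval, C(unitInterval, Y)) :=
  ContinuousMap.curry
    ⟨fun p => hq (el ((1 - (p.1.2 : ℝ)) * g1R p.2 + (p.1.2 : ℝ)),
        R.K (el ((1 - (p.1.2 : ℝ)) * g2R p.2 + (p.1.2 : ℝ) * (1 - (p.2 : ℝ))), p.1.1)), by
      have cr : Continuous fun p : (W × unitInterval) × unitInterval => ((p.1.2 : ℝ)) :=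
        continuous_subtype_val.comp (continuous_snd.comp continuous_fst)
      have cu : Continuous fun p : (W × unitInterval) × unitInterval => ((p.2 : ℝ)) :=
        continuous_subtype_val.comp continuous_snd
      have cw : Continuous fun p : (W × unitInterval) × unitInterval => p.1.1 :=
        continuous_fst.comp continuous_fst
      exact hq.continuous.comp
        ((continuous_el.comp (((continuous_const.sub cr).mul
            (continuous_g1R.comp continuous_snd)).add cr)).prodMk
          (R.K.continuous.comp
            ((continuous_el.comp (((continuous_const.sub cr).mul
                (continuous_g2R.comp continuous_snd)).add
              (cr.mul (continuous_const.sub cu)))).prodMk cw)))⟩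

/-- the deformed fibre points -/
def FibA : C(W × unitInterval, ganeaF κ 0) where
  toFun p := ⟨(ρ (R.θ (β p.1)), bigA R f ρ κ χ hq p, ρ (R.θ (η p.1))), by
    constructor
    · show hq (el ((1 - (p.2 : ℝ)) * g1R 0 + (p.2 : ℝ)),
          R.K (el ((1 - (p.2 : ℝ)) * g2R 0 + (p.2 : ℝ) * (1 - ((0 : unitInterval) : ℝ))),
            p.1)) = _
      have e1 : (1 - (p.2 : ℝ)) * g1R 0 + (p.2 : ℝ) = 1 := by
        simp only [g1R]; norm_num
      have e2 : (1 - (p.2 : ℝ)) * g2R 0 + (p.2 : ℝ) * (1 - ((0 : unitInterval) : ℝ)) = 1 := by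
        simp only [g2R]; norm_num
      rw [e1, e2, el_one, hq.apply_one, R.K.apply_one]; rfl
    · show hq (el ((1 - (p.2 : ℝ)) * g1R 1 + (p.2 : ℝ)),
          R.K (el ((1 - (p.2 : ℝ)) * g2R 1 + (p.2 : ℝ) * (1 - ((1 : unitInterval) : ℝ))),
            p.1)) = _
      have e1 : (1 - (p.2 : ℝ)) * g1R 1 + (p.2 : ℝ) = 1 := by
        simp only [g1R]; norm_num
      have e2 : (1 - (p.2 : ℝ)) * g2R 1 + (p.2 : ℝ) * (1 - ((1 : unitInterval) : ℝ)) = 0 := by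
        simp only [g2R]; norm_num
      rw [e1, e2, el_one, el_zero, hq.apply_one, R.K.apply_zero]; rfl⟩
  continuous_toFun := by
    apply Continuous.subtype_mk
    exact ((map_continuous ρ).comp ((map_continuous R.θ).comp
        ((map_continuous β).comp continuous_fst))).prodMk
      ((map_continuous (bigA R f ρ κ χ hq)).prodMk
        ((map_continuous ρ).comp ((map_continuous R.θ).comp
          ((map_continuous η).comp continuous_fst))))

/-- the limit fibre points -/
def PsiFib : C(W, ganeaF κ 0) where
  toFun w := ⟨(ρ (R.θ (β w)),
      (ContinuousMap.curry ⟨fun p : W × unitInterval => κ (ρ (R.K (σ p.2, p.1))),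
        (map_continuous κ).comp ((map_continuous ρ).comp (R.K.continuous.comp
          ((continuous_symm.comp continuous_snd).prodMk continuous_fst)))⟩) w,
      ρ (R.θ (η w))), by
    constructor
    · show κ (ρ (R.K (σ 0, w))) = _
      rw [symm_zero, R.K.apply_one]; rfl
    · show κ (ρ (R.K (σ 1, w))) = _
      rw [symm_one, R.K.apply_zero]; rfl⟩
  continuous_toFun := by
    apply Continuous.subtype_mk
    refine ((map_continuous ρ).comp ((map_continuous R.θ).comp
      (map_continuous β))).prodMk (Continuous.prodMk ?_ ?_)
    · exact map_continuous _
    · exact (map_continuous ρ).comp ((map_continuous R.θ).comp (map_continuous η))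

lemma FibA_one (w : W) : FibA R f ρ κ χ hq (w, 1) = PsiFib R ρ κ w := by
  apply Subtype.ext
  refine Prod.ext rfl (Prod.ext ?_ rfl)
  show (bigA R f ρ κ χ hq (w, 1) : C(unitInterval, Y)) = _
  ext u
  show hq (el ((1 - ((1 : unitInterval) : ℝ)) * g1R u + ((1 : unitInterval) : ℝ)),
      R.K (el ((1 - ((1 : unitInterval) : ℝ)) * g2R u
        + ((1 : unitInterval) : ℝ) * (1 - (u : ℝ))), w)) = κ (ρ (R.K (σ u, w)))
  have e1 : (1 - ((1 : unitInterval) : ℝ)) * g1R u + ((1 : unitInterval) : ℝ) = 1 := by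
    norm_num
  have e2 : (1 - ((1 : unitInterval) : ℝ)) * g2R u
      + ((1 : unitInterval) : ℝ) * (1 - (u : ℝ)) = 1 - (u : ℝ) := by norm_num
  have e3 : el (1 - (u : ℝ)) = σ u := by
    apply Subtype.ext
    rw [el_coe_of_mem (by have := u.2.2; linarith) (by have := u.2.1; linarith), coe_symm_eq]
  rw [e1, e2, el_one, e3, hq.apply_one]; rfl

end Cond1

end Stmt7

namespace Stmt7

section Cond1b

variable {W A B X Y : Type u} [TopologicalSpace W] [TopologicalSpace A] [TopologicalSpace B]
  [TopologicalSpace X] [TopologicalSpace Y] {η β : C(W, A)}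
  (R : RelSusp η β) (f : C(R.S, X)) (ρ : C(R.S, B)) (κ : C(B, Y)) (χ : C(X, Y))
  (hq : ContinuousMap.Homotopy (χ.comp f) (κ.comp ρ))
  (hf : ∀ a, f (R.θ a) = (f.comp R.θ) a)

lemma phiK_zero_phi : (phiK R f ρ κ χ hq 0).φ = ρ.comp R.θ := rfl

lemma phiK_one_phi :
    (phiK R f ρ κ χ hq 1).φ = phiSucc R f ρ κ χ hq 0 (phiK R f ρ κ χ hq 0) := rfl

lemma omegaDCyl_mk_inl (a : A) :
    omegaDCyl R (f.comp R.θ) f hf (Quot.mk _ (Sum.inl a) : DCyl η β)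
      = (Quot.mk _ (Sum.inr (Sum.inl a)) : GaneaG (f.comp R.θ) 1) := rfl

lemma omegaDCyl_mk_mid (a : A) :
    omegaDCyl R (f.comp R.θ) f hf (Quot.mk _ (Sum.inr (Sum.inl a)) : DCyl η β)
      = (Quot.mk _ (Sum.inl a) : GaneaG (f.comp R.θ) 1) := rfl

lemma omegaDCyl_mk_cyl (wt : W × unitInterval) :
    omegaDCyl R (f.comp R.θ) f hf (Quot.mk _ (Sum.inr (Sum.inr wt)) : DCyl η β)
      = (Quot.mk _ (Sum.inr (Sum.inr (omegaF R (f.comp R.θ) f hf wt.1, σ wt.2)))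
          : GaneaG (f.comp R.θ) 1) := rfl

lemma FibA_zero (w : W) :
    FibA R f ρ κ χ hq (w, 0)
      = phiF R f ρ κ χ hq 0 (phiK R f ρ κ χ hq 0) (omegaF R (f.comp R.θ) f hf w) := by
  apply Subtype.ext
  refine Prod.ext rfl (Prod.ext ?_ rfl)
  show (bigA R f ρ κ χ hq (w, 0) : C(unitInterval, Y))
    = (master R f ρ κ χ hq 0 (phiK R f ρ κ χ hq 0)).curry (omegaF R (f.comp R.θ) f hf w)
  ext u
  rw [ContinuousMap.curry_apply]
  show hq (el ((1 - ((0 : unitInterval) : ℝ)) * g1R u + ((0 : unitInterval) : ℝ)),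
      R.K (el ((1 - ((0 : unitInterval) : ℝ)) * g2R u
        + ((0 : unitInterval) : ℝ) * (1 - (u : ℝ))), w))
    = (if (u : ℝ) ≤ 1 / 2 then
        (phiK R f ρ κ χ hq 0).K (el (2 * (u : ℝ)), (omegaF R (f.comp R.θ) f hf w).1.1)
      else if (u : ℝ) ≤ 3 / 4 then
        χ ((omegaF R (f.comp R.θ) f hf w).1.2.1 (el (4 * (u : ℝ) - 2)))
      else hq (el (4 * (u : ℝ) - 3), R.θ (omegaF R (f.comp R.θ) f hf w).1.2.2))
  have e1 : (1 - ((0 : unitInterval) : ℝ)) * g1R u + ((0 : unitInterval) : ℝ) = g1R u := by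
    norm_num
  have e2 : (1 - ((0 : unitInterval) : ℝ)) * g2R u
      + ((0 : unitInterval) : ℝ) * (1 - (u : ℝ)) = g2R u := by norm_num
  rw [e1, e2]
  by_cases h1 : (u : ℝ) ≤ 1 / 2
  · rw [if_pos h1]
    show _ = hq (σ (el (2 * (u : ℝ))), R.θ (β w))
    rw [el_symm (by have := u.2.1; linarith) (by linarith)]
    simp only [g1R, g2R, if_pos h1]
    rw [el_one, R.K.apply_one,
      show (1 : ℝ) - 2 * (u : ℝ) = 1 - 2 * (u : ℝ) from rfl]
    rfl
  · rw [if_neg h1]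
    by_cases h2 : (u : ℝ) ≤ 3 / 4
    · rw [if_pos h2]
      show _ = χ (f (R.K (σ (el (4 * (u : ℝ) - 2)), w)))
      rw [el_symm (by linarith [not_le.mp h1]) (by linarith),
        show (1 : ℝ) - (4 * (u : ℝ) - 2) = 3 - 4 * (u : ℝ) by ring]
      simp only [g1R, g2R, if_neg h1, if_pos h2]
      rw [el_zero, hq.apply_zero]
      rfl
    · rw [if_neg h2]
      simp only [g1R, g2R, if_neg h1, if_neg h2]
      rw [el_zero, R.K.apply_zero]
      rfl

/-- the middle map of the first condition -/
def MA : C(DCyl η β, GaneaG κ 1) where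
  toFun := Quot.lift (Sum.elim
      (fun a => ganeaAlpha κ 1 (ρ (R.θ a)))
      (Sum.elim (fun a => ganeaGamma κ 0 (ρ (R.θ a)))
        (fun wt => cylpt κ 0 (PsiFib R ρ κ wt.1) (σ wt.2))))
    (by
      rintro x y (⟨w⟩ | ⟨w⟩)
      · show ganeaAlpha κ 1 (ρ (R.θ (η w))) = cylpt κ 0 (PsiFib R ρ κ w) (σ 0)
        rw [symm_zero, cylpt_one]; rfl
      · show ganeaGamma κ 0 (ρ (R.θ (β w))) = cylpt κ 0 (PsiFib R ρ κ w) (σ 1)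
        rw [symm_one, cylpt_zero]; rfl)
  continuous_toFun := by
    apply continuous_quot_lift
    refine Continuous.sumElim ?_ (Continuous.sumElim ?_ ?_)
    · exact (map_continuous (ganeaAlpha κ 1)).comp
        ((map_continuous ρ).comp (map_continuous R.θ))
    · exact (map_continuous (ganeaGamma κ 0)).comp
        ((map_continuous ρ).comp (map_continuous R.θ))
    · exact (continuous_cylpt κ 0).comp
        (((map_continuous (PsiFib R ρ κ)).comp continuous_fst).prodMk
          (continuous_symm.comp continuous_snd))

lemma MA_mk_inl (a : A) :
    MA R ρ κ (Quot.mk _ (Sum.inl a) : DCyl η β) = ganeaAlpha κ 1 (ρ (R.θ a)) := rfl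

lemma MA_mk_mid (a : A) :
    MA R ρ κ (Quot.mk _ (Sum.inr (Sum.inl a)) : DCyl η β)
      = ganeaGamma κ 0 (ρ (R.θ a)) := rfl

lemma MA_mk_cyl (wt : W × unitInterval) :
    MA R ρ κ (Quot.mk _ (Sum.inr (Sum.inr wt)) : DCyl η β)
      = cylpt κ 0 (PsiFib R ρ κ wt.1) (σ wt.2) := rfl

/-- the constant-path legs of the first homotopy -/
def cInl : C(A, C(unitInterval, GaneaG κ 1)) :=
  ContinuousMap.curry
    ⟨fun p => ganeaAlpha κ 1 (ρ (R.θ p.1)),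
      (map_continuous (ganeaAlpha κ 1)).comp ((map_continuous ρ).comp
        ((map_continuous R.θ).comp continuous_fst))⟩

def cInr : C(A, C(unitInterval, GaneaG κ 1)) :=
  ContinuousMap.curry
    ⟨fun p => ganeaGamma κ 0 (ρ (R.θ p.1)),
      (map_continuous (ganeaGamma κ 0)).comp ((map_continuous ρ).comp
        ((map_continuous R.θ).comp continuous_fst))⟩

/-- the cylinder part of the first homotopy -/
def cylA : C(W × unitInterval, C(unitInterval, GaneaG κ 1)) :=
  ContinuousMap.curry
    ⟨fun p => cylpt κ 0 (FibA R f ρ κ χ hq (p.1.1, p.2)) (σ p.1.2),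
      (continuous_cylpt κ 0).comp
        (((map_continuous (FibA R f ρ κ χ hq)).comp
          ((continuous_fst.comp continuous_fst).prodMk continuous_snd)).prodMk
          (continuous_symm.comp (continuous_snd.comp continuous_fst)))⟩

/-- curried form of the first homotopy -/
def HAlift : C(DCyl η β, C(unitInterval, GaneaG κ 1)) where
  toFun := Quot.lift (Sum.elim (fun a => cInl R ρ κ a)
      (Sum.elim (fun a => cInr R ρ κ a) (fun wt => cylA R f ρ κ χ hq wt)))
    (by
      rintro x y (⟨w⟩ | ⟨w⟩)
      · show cInl R ρ κ (η w) = cylA R f ρ κ χ hq (w, 0)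
        ext r
        show ganeaAlpha κ 1 (ρ (R.θ (η w))) = cylpt κ 0 (FibA R f ρ κ χ hq (w, r)) (σ 0)
        rw [symm_zero, cylpt_one]; rfl
      · show cInr R ρ κ (β w) = cylA R f ρ κ χ hq (w, 1)
        ext r
        show ganeaGamma κ 0 (ρ (R.θ (β w))) = cylpt κ 0 (FibA R f ρ κ χ hq (w, r)) (σ 1)
        rw [symm_one, cylpt_zero]; rfl)
  continuous_toFun := by
    apply continuous_quot_lift
    refine Continuous.sumElim ?_ (Continuous.sumElim ?_ ?_)
    · exact map_continuous (cInl R ρ κ)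
    · exact map_continuous (cInr R ρ κ)
    · exact map_continuous (cylA R f ρ κ χ hq)

lemma HAlift_mk_inl (a : A) :
    HAlift R f ρ κ χ hq (Quot.mk _ (Sum.inl a) : DCyl η β) = cInl R ρ κ a := rfl

lemma HAlift_mk_mid (a : A) :
    HAlift R f ρ κ χ hq (Quot.mk _ (Sum.inr (Sum.inl a)) : DCyl η β) = cInr R ρ κ a := rfl

lemma HAlift_mk_cyl (wt : W × unitInterval) :
    HAlift R f ρ κ χ hq (Quot.mk _ (Sum.inr (Sum.inr wt)) : DCyl η β)
      = cylA R f ρ κ χ hq wt := rfl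

lemma cInl_apply (a : A) (r : unitInterval) :
    cInl R ρ κ a r = ganeaAlpha κ 1 (ρ (R.θ a)) := rfl

lemma cInr_apply (a : A) (r : unitInterval) :
    cInr R ρ κ a r = ganeaGamma κ 0 (ρ (R.θ a)) := rfl

lemma cylA_apply (wt : W × unitInterval) (r : unitInterval) :
    cylA R f ρ κ χ hq wt r = cylpt κ 0 (FibA R f ρ κ χ hq (wt.1, r)) (σ wt.2) := rfl

/-- the first homotopy -/
def HA : ContinuousMap.Homotopy
    (((phiK R f ρ κ χ hq 1).φ).comp (omegaDCyl R (f.comp R.θ) f hf)) (MA R ρ κ) where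
  toFun p := HAlift R f ρ κ χ hq p.2 p.1
  continuous_toFun :=
    ((HAlift R f ρ κ χ hq).uncurry.continuous).comp (continuous_snd.prodMk continuous_fst)
  map_zero_left z := by
    induction z using Quot.ind with
    | mk pt =>
      rcases pt with a | a | wt
      · show HAlift R f ρ κ χ hq (Quot.mk _ (Sum.inl a)) 0
          = (((phiK R f ρ κ χ hq 1).φ).comp (omegaDCyl R (f.comp R.θ) f hf))
              (Quot.mk _ (Sum.inl a))
        rw [ContinuousMap.comp_apply, phiK_one_phi, omegaDCyl_mk_inl, phiSucc_mk_alpha,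
          HAlift_mk_inl, cInl_apply]
      · show HAlift R f ρ κ χ hq (Quot.mk _ (Sum.inr (Sum.inl a))) 0
          = (((phiK R f ρ κ χ hq 1).φ).comp (omegaDCyl R (f.comp R.θ) f hf))
              (Quot.mk _ (Sum.inr (Sum.inl a)))
        rfl
      · show HAlift R f ρ κ χ hq (Quot.mk _ (Sum.inr (Sum.inr wt))) 0
          = (((phiK R f ρ κ χ hq 1).φ).comp (omegaDCyl R (f.comp R.θ) f hf))
              (Quot.mk _ (Sum.inr (Sum.inr wt)))
        show cylpt κ 0 (FibA R f ρ κ χ hq (wt.1, 0)) (σ wt.2) = _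
        rw [FibA_zero (hf := hf)]
        rfl
  map_one_left z := by
    induction z using Quot.ind with
    | mk pt =>
      rcases pt with a | a | wt
      · show HAlift R f ρ κ χ hq (Quot.mk _ (Sum.inl a)) 1 = MA R ρ κ (Quot.mk _ (Sum.inl a))
        rw [HAlift_mk_inl, cInl_apply, MA_mk_inl]
      · show HAlift R f ρ κ χ hq (Quot.mk _ (Sum.inr (Sum.inl a))) 1
          = MA R ρ κ (Quot.mk _ (Sum.inr (Sum.inl a)))
        rw [HAlift_mk_mid, cInr_apply, MA_mk_mid]
      · show HAlift R f ρ κ χ hq (Quot.mk _ (Sum.inr (Sum.inr wt))) 1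
          = MA R ρ κ (Quot.mk _ (Sum.inr (Sum.inr wt)))
        rw [HAlift_mk_cyl, cylA_apply, FibA_one, MA_mk_cyl]

end Cond1b

end Stmt7

namespace Stmt7

section Cond1c

variable {W A B X Y : Type u} [TopologicalSpace W] [TopologicalSpace A] [TopologicalSpace B]
  [TopologicalSpace X] [TopologicalSpace Y] {η β : C(W, A)}
  (R : RelSusp η β) (f : C(R.S, X)) (ρ : C(R.S, B)) (κ : C(B, Y)) (χ : C(X, Y))
  (hq : ContinuousMap.Homotopy (χ.comp f) (κ.comp ρ))
  (hf : ∀ a, f (R.θ a) = (f.comp R.θ) a)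

lemma el_one_sub (x : unitInterval) : el (1 - (x : ℝ)) = σ x := by
  apply Subtype.ext
  rw [el_coe_of_mem (by have := x.2.2; linarith) (by have := x.2.1; linarith), coe_symm_eq]

/-- constant fibre points -/
def cFib : C(B, ganeaF κ 0) where
  toFun b := ⟨(b, (ContinuousMap.curry
      ⟨fun p : B × unitInterval => κ p.1, (map_continuous κ).comp continuous_fst⟩) b, b),
    rfl, rfl⟩
  continuous_toFun := by
    apply Continuous.subtype_mk
    exact continuous_id.prodMk ((map_continuous _).prodMk continuous_id)

/-- the sliding fibre points -/
def FibB : C(W × unitInterval, ganeaF κ 0) where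
  toFun p := ⟨(ρ (R.θ (β p.1)),
      (ContinuousMap.curry ⟨fun p2 : (W × unitInterval) × unitInterval =>
          κ (ρ (R.K (el (1 - (p2.1.2 : ℝ) * (p2.2 : ℝ)), p2.1.1))),
        (map_continuous κ).comp ((map_continuous ρ).comp (R.K.continuous.comp
          ((continuous_el.comp (continuous_const.sub
            ((continuous_subtype_val.comp (continuous_snd.comp continuous_fst)).mul
              (continuous_subtype_val.comp continuous_snd)))).prodMk
            (continuous_fst.comp continuous_fst))))⟩) p,
      ρ (R.K (σ p.2, p.1))), by
    constructor
    · show κ (ρ (R.K (el (1 - (p.2 : ℝ) * ((0 : unitInterval) : ℝ)), p.1))) = _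
      rw [show (1 : ℝ) - (p.2 : ℝ) * ((0 : unitInterval) : ℝ) = 1 by norm_num,
        el_one, R.K.apply_one]
      rfl
    · show κ (ρ (R.K (el (1 - (p.2 : ℝ) * ((1 : unitInterval) : ℝ)), p.1))) = _
      rw [show (1 : ℝ) - (p.2 : ℝ) * ((1 : unitInterval) : ℝ) = 1 - (p.2 : ℝ) by norm_num,
        el_one_sub]⟩
  continuous_toFun := by
    apply Continuous.subtype_mk
    refine ((map_continuous ρ).comp ((map_continuous R.θ).comp
      ((map_continuous β).comp continuous_fst))).prodMk (Continuous.prodMk ?_ ?_)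
    · exact map_continuous _
    · exact (map_continuous ρ).comp (R.K.continuous.comp
        ((continuous_symm.comp continuous_snd).prodMk continuous_fst))

lemma FibB_zero (w : W) : FibB R ρ κ (w, 0) = cFib κ (ρ (R.θ (β w))) := by
  apply Subtype.ext
  refine Prod.ext rfl (Prod.ext ?_ ?_)
  · ext u
    show κ (ρ (R.K (el (1 - ((0 : unitInterval) : ℝ) * (u : ℝ)), w))) = κ (ρ (R.θ (β w)))
    rw [show (1 : ℝ) - ((0 : unitInterval) : ℝ) * (u : ℝ) = 1 by norm_num,
      el_one, R.K.apply_one]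
    rfl
  · show ρ (R.K (σ 0, w)) = ρ (R.θ (β w))
    rw [symm_zero, R.K.apply_one]
    rfl

lemma FibB_one (w : W) : FibB R ρ κ (w, 1) = PsiFib R ρ κ w := by
  apply Subtype.ext
  refine Prod.ext rfl (Prod.ext ?_ ?_)
  · ext u
    show κ (ρ (R.K (el (1 - ((1 : unitInterval) : ℝ) * (u : ℝ)), w)))
      = κ (ρ (R.K (σ u, w)))
    rw [show (1 : ℝ) - ((1 : unitInterval) : ℝ) * (u : ℝ) = 1 - (u : ℝ) by norm_num,
      el_one_sub]
  · show ρ (R.K (σ 1, w)) = ρ (R.θ (η w))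
    rw [symm_one, R.K.apply_zero]
    rfl

/-- the climbing leg of the second homotopy -/
def cInrB : C(A, C(unitInterval, GaneaG κ 1)) :=
  ContinuousMap.curry
    ⟨fun p => cylpt κ 0 (cFib κ (ρ (R.θ p.1))) (el (2 * (p.2 : ℝ) - 1)),
      (continuous_cylpt κ 0).comp
        (((map_continuous (cFib κ)).comp ((map_continuous ρ).comp
            ((map_continuous R.θ).comp continuous_fst))).prodMk
          (continuous_el.comp ((continuous_const.mul
            (continuous_subtype_val.comp continuous_snd)).sub continuous_const)))⟩

/-- the cylinder part of the second homotopy -/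
def cylB : C(W × unitInterval, C(unitInterval, GaneaG κ 1)) :=
  ContinuousMap.curry
    ⟨fun p => cylpt κ 0
        (FibB R ρ κ (p.1.1, el (1 - (p.1.2 : ℝ) * min (2 * (p.2 : ℝ)) 1)))
        (el (max (1 - (p.1.2 : ℝ)) (2 * (p.2 : ℝ) - 1))), by
      have ct : Continuous fun p : (W × unitInterval) × unitInterval => ((p.1.2 : ℝ)) :=
        continuous_subtype_val.comp (continuous_snd.comp continuous_fst)
      have cr : Continuous fun p : (W × unitInterval) × unitInterval => ((p.2 : ℝ)) :=
        continuous_subtype_val.comp continuous_snd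
      exact (continuous_cylpt κ 0).comp
        (((map_continuous (FibB R ρ κ)).comp
          ((continuous_fst.comp continuous_fst).prodMk
            (continuous_el.comp (continuous_const.sub
              (ct.mul ((continuous_const.mul cr).min continuous_const)))))).prodMk
          (continuous_el.comp ((continuous_const.sub ct).max
            ((continuous_const.mul cr).sub continuous_const))))⟩

lemma cInrB_apply (a : A) (r : unitInterval) :
    cInrB R ρ κ a r = cylpt κ 0 (cFib κ (ρ (R.θ a))) (el (2 * (r : ℝ) - 1)) := rfl

lemma cylB_apply (wt : W × unitInterval) (r : unitInterval) :
    cylB R ρ κ wt r = cylpt κ 0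
        (FibB R ρ κ (wt.1, el (1 - (wt.2 : ℝ) * min (2 * (r : ℝ)) 1)))
        (el (max (1 - (wt.2 : ℝ)) (2 * (r : ℝ) - 1))) := rfl

lemma glue_mk_inl (a : A) :
    DCyl.glue R.θ R.θ R.K (Quot.mk _ (Sum.inl a) : DCyl η β) = R.θ a := rfl

lemma glue_mk_mid (a : A) :
    DCyl.glue R.θ R.θ R.K (Quot.mk _ (Sum.inr (Sum.inl a)) : DCyl η β) = R.θ a := rfl

lemma glue_mk_cyl (wt : W × unitInterval) :
    DCyl.glue R.θ R.θ R.K (Quot.mk _ (Sum.inr (Sum.inr wt)) : DCyl η β)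
      = R.K (wt.2, wt.1) := rfl

/-- curried form of the second homotopy -/
def HBlift : C(DCyl η β, C(unitInterval, GaneaG κ 1)) where
  toFun := Quot.lift (Sum.elim (fun a => cInl R ρ κ a)
      (Sum.elim (fun a => cInrB R ρ κ a) (fun wt => cylB R ρ κ wt)))
    (by
      rintro x y (⟨w⟩ | ⟨w⟩)
      · show cInl R ρ κ (η w) = cylB R ρ κ (w, 0)
        ext r
        rw [cInl_apply, cylB_apply]
        rw [show (1 : ℝ) - ((0 : unitInterval) : ℝ) * min (2 * (r : ℝ)) 1 = 1 by norm_num,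
          el_one]
        rw [show max (1 - ((0 : unitInterval) : ℝ)) (2 * (r : ℝ) - 1) = 1 by
          rw [max_eq_left (by have := r.2.2; norm_num; linarith)]; norm_num, el_one]
        rw [cylpt_one]
        show ganeaAlpha κ 1 (ρ (R.θ (η w))) = ganeaAlpha κ (0 + 1) (ρ (R.K (σ 1, w)))
        rw [symm_one, R.K.apply_zero]
        rfl
      · show cInrB R ρ κ (β w) = cylB R ρ κ (w, 1)
        ext r
        rw [cInrB_apply, cylB_apply]
        rw [show (1 : ℝ) - ((1 : unitInterval) : ℝ) * min (2 * (r : ℝ)) 1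
            = 1 - min (2 * (r : ℝ)) 1 by norm_num]
        rw [show max (1 - ((1 : unitInterval) : ℝ)) (2 * (r : ℝ) - 1)
            = max 0 (2 * (r : ℝ) - 1) by norm_num]
        rcases le_or_gt (2 * (r : ℝ) - 1) 0 with h | h
        · rw [el_of_nonpos h, show max (0 : ℝ) (2 * (r : ℝ) - 1) = 0 from max_eq_left h,
            el_zero, cylpt_zero, cylpt_zero]
          rfl
        · rw [show min (2 * (r : ℝ)) 1 = 1 from min_eq_right (by linarith),
            show el ((1 : ℝ) - 1) = 0 by rw [sub_self]; exact el_zero,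
            show max (0 : ℝ) (2 * (r : ℝ) - 1) = 2 * (r : ℝ) - 1 from max_eq_right h.le,
            FibB_zero])
  continuous_toFun := by
    apply continuous_quot_lift
    refine Continuous.sumElim ?_ (Continuous.sumElim ?_ ?_)
    · exact map_continuous (cInl R ρ κ)
    · exact map_continuous (cInrB R ρ κ)
    · exact map_continuous (cylB R ρ κ)

lemma HBlift_mk_inl (a : A) :
    HBlift R ρ κ (Quot.mk _ (Sum.inl a) : DCyl η β) = cInl R ρ κ a := rfl

lemma HBlift_mk_mid (a : A) :
    HBlift R ρ κ (Quot.mk _ (Sum.inr (Sum.inl a)) : DCyl η β) = cInrB R ρ κ a := rfl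

lemma HBlift_mk_cyl (wt : W × unitInterval) :
    HBlift R ρ κ (Quot.mk _ (Sum.inr (Sum.inr wt)) : DCyl η β) = cylB R ρ κ wt := rfl

/-- the second homotopy -/
def HB : ContinuousMap.Homotopy (MA R ρ κ)
    (((ganeaAlpha κ 1).comp ρ).comp (DCyl.glue R.θ R.θ R.K)) where
  toFun p := HBlift R ρ κ p.2 p.1
  continuous_toFun :=
    ((HBlift R ρ κ).uncurry.continuous).comp (continuous_snd.prodMk continuous_fst)
  map_zero_left z := by
    induction z using Quot.ind with
    | mk pt =>
      rcases pt with a | a | wt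
      · show HBlift R ρ κ (Quot.mk _ (Sum.inl a)) 0 = MA R ρ κ (Quot.mk _ (Sum.inl a))
        rw [HBlift_mk_inl, cInl_apply, MA_mk_inl]
      · show HBlift R ρ κ (Quot.mk _ (Sum.inr (Sum.inl a))) 0
          = MA R ρ κ (Quot.mk _ (Sum.inr (Sum.inl a)))
        rw [HBlift_mk_mid, cInrB_apply, MA_mk_mid,
          show el (2 * ((0 : unitInterval) : ℝ) - 1) = 0 from el_of_nonpos (by norm_num),
          cylpt_zero]
        rfl
      · show HBlift R ρ κ (Quot.mk _ (Sum.inr (Sum.inr wt))) 0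
          = MA R ρ κ (Quot.mk _ (Sum.inr (Sum.inr wt)))
        rw [HBlift_mk_cyl, cylB_apply, MA_mk_cyl,
          show (1 : ℝ) - (wt.2 : ℝ) * min (2 * ((0 : unitInterval) : ℝ)) 1 = 1 by
            norm_num, el_one, FibB_one,
          show max (1 - (wt.2 : ℝ)) (2 * ((0 : unitInterval) : ℝ) - 1) = 1 - (wt.2 : ℝ) by
            rw [max_eq_left (by have := wt.2.2.2; norm_num; linarith)],
          el_one_sub]
  map_one_left z := by
    induction z using Quot.ind with
    | mk pt =>
      rcases pt with a | a | wt
      · show HBlift R ρ κ (Quot.mk _ (Sum.inl a)) 1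
          = (((ganeaAlpha κ 1).comp ρ).comp (DCyl.glue R.θ R.θ R.K))
              (Quot.mk _ (Sum.inl a))
        rw [ContinuousMap.comp_apply, ContinuousMap.comp_apply, glue_mk_inl,
          HBlift_mk_inl, cInl_apply]
      · show HBlift R ρ κ (Quot.mk _ (Sum.inr (Sum.inl a))) 1
          = (((ganeaAlpha κ 1).comp ρ).comp (DCyl.glue R.θ R.θ R.K))
              (Quot.mk _ (Sum.inr (Sum.inl a)))
        rw [ContinuousMap.comp_apply, ContinuousMap.comp_apply, glue_mk_mid,
          HBlift_mk_mid, cInrB_apply,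
          show el (2 * ((1 : unitInterval) : ℝ) - 1) = 1 by
            rw [show (2 : ℝ) * ((1 : unitInterval) : ℝ) - 1 = 1 by norm_num]; exact el_one,
          cylpt_one]
        rfl
      · show HBlift R ρ κ (Quot.mk _ (Sum.inr (Sum.inr wt))) 1
          = (((ganeaAlpha κ 1).comp ρ).comp (DCyl.glue R.θ R.θ R.K))
              (Quot.mk _ (Sum.inr (Sum.inr wt)))
        rw [ContinuousMap.comp_apply, ContinuousMap.comp_apply, glue_mk_cyl,
          HBlift_mk_cyl, cylB_apply,
          show (1 : ℝ) - (wt.2 : ℝ) * min (2 * ((1 : unitInterval) : ℝ)) 1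
              = 1 - (wt.2 : ℝ) by
            rw [min_eq_right (by norm_num : (1:ℝ) ≤ 2 * ((1 : unitInterval) : ℝ))]
            norm_num,
          el_one_sub,
          show max (1 - (wt.2 : ℝ)) (2 * ((1 : unitInterval) : ℝ) - 1) = 1 by
            rw [max_eq_right (by have := wt.2.2.1; norm_num; linarith)]; norm_num,
          el_one, cylpt_one]
        show ganeaAlpha κ (0 + 1) (ρ (R.K (σ (σ wt.2), wt.1)))
          = ganeaAlpha κ 1 (ρ (R.K (wt.2, wt.1)))
        rw [symm_symm]

end Cond1c

end Stmt7

namespace Stmt7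

section Cond1d

variable {W A B X Y : Type u} [TopologicalSpace W] [TopologicalSpace A] [TopologicalSpace B]
  [TopologicalSpace X] [TopologicalSpace Y] {η β : C(W, A)}
  (R : RelSusp η β) (f : C(R.S, X)) (ρ : C(R.S, B)) (κ : C(B, Y)) (χ : C(X, Y))
  (hq : ContinuousMap.Homotopy (χ.comp f) (κ.comp ρ))
  (hf : ∀ a, f (R.θ a) = (f.comp R.θ) a)

lemma cond1 :
    (((phiK R f ρ κ χ hq 1).φ).comp (omega R (f.comp R.θ) f hf 0)).Homotopic
      ((ganeaAlpha κ 1).comp ρ) := by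
  have e0 : omega R (f.comp R.θ) f hf 0 = (omegaDCyl R (f.comp R.θ) f hf).comp R.inv := by
    show (ganeaGammaFrom (f.comp R.θ) 1 0).comp (omega1 R (f.comp R.θ) f hf) = _
    rw [show ganeaGammaFrom (f.comp R.θ) 1 0 = ContinuousMap.id _ from rfl,
      ContinuousMap.id_comp]
    rfl
  rw [e0, ← ContinuousMap.comp_assoc]
  have step1 : ContinuousMap.Homotopic
      ((((phiK R f ρ κ χ hq 1).φ).comp (omegaDCyl R (f.comp R.θ) f hf)).comp R.inv)
      ((((ganeaAlpha κ 1).comp ρ).comp (DCyl.glue R.θ R.θ R.K)).comp R.inv) :=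
    ContinuousMap.Homotopic.comp
      ⟨(HA R f ρ κ χ hq hf).trans (HB R ρ κ)⟩ (ContinuousMap.Homotopic.refl R.inv)
  refine step1.trans ?_
  rw [ContinuousMap.comp_assoc]
  have step2 := ContinuousMap.Homotopic.comp
    (ContinuousMap.Homotopic.refl ((ganeaAlpha κ 1).comp ρ)) R.glue_inv
  refine step2.trans ?_
  rw [ContinuousMap.comp_id]

end Cond1d

end Stmt7
/-- Let `η, β : W → A`, `f : Σ_A W → X` with `ι_X = f ∘ θ`, and let
`ρ : Σ_A W → B`, `κ_Y : B → Y`, `χ : X → Y` form a homotopy commutative square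
`χ ∘ f ≃ κ_Y ∘ ρ`. Then for every `n = 1 + m ≥ 1` this square splits through the Ganea
constructions: there exist maps `φ_1 : G_1(ι_X) → G_1(κ_Y)` and `φ_n : G_n(ι_X) → G_n(κ_Y)`
such that `φ_1 ∘ ω_1 ≃ α_1(κ_Y) ∘ ρ`, `γ_{1,n}(κ_Y) ∘ φ_1 ≃ φ_n ∘ γ_{1,n}(ι_X)` and
`g_n(κ_Y) ∘ φ_n ≃ χ ∘ g_n(ι_X)`, where the Ganea construction of `κ_Y : B → Y` has base `B`. -/
theorem ganea_splitting_of_square {W A B X Y : Type u} [TopologicalSpace W] [TopologicalSpace A]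
    [TopologicalSpace B] [TopologicalSpace X] [TopologicalSpace Y]
    {η β : C(W, A)} (R : RelSusp η β) (f : C(R.S, X)) (ρ : C(R.S, B)) (κ : C(B, Y))
    (χ : C(X, Y)) (hsq : (χ.comp f).Homotopic (κ.comp ρ)) (m : ℕ) :
    ∃ (φ₁ : C(GaneaG (f.comp R.θ) 1, GaneaG κ 1))
      (φn : C(GaneaG (f.comp R.θ) (1 + m), GaneaG κ (1 + m))),
      (φ₁.comp (omega R (f.comp R.θ) f (fun _ => rfl) 0)).Homotopic ((ganeaAlpha κ 1).comp ρ) ∧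
      ((ganeaGammaFrom κ 1 m).comp φ₁).Homotopic (φn.comp (ganeaGammaFrom (f.comp R.θ) 1 m)) ∧
      ((ganeaMap κ (1 + m)).comp φn).Homotopic (χ.comp (ganeaMap (f.comp R.θ) (1 + m))) := by
  obtain ⟨hq⟩ := hsq
  refine ⟨(Stmt7.phiK R f ρ κ χ hq 1).φ, (Stmt7.phiK R f ρ κ χ hq (1 + m)).φ, ?_, ?_, ?_⟩
  · exact Stmt7.cond1 R f ρ κ χ hq (fun _ => rfl)
  · rw [Stmt7.gammaFrom_phi]
  · exact ⟨(Stmt7.phiK R f ρ κ χ hq (1 + m)).K⟩
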